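/- For all positive integers s and k, 2^{s−1} · A(s, k) ≥ (2^s − 1) · k, i.e., A(s,k) ≥ ((2^s − 1)/2^{s−1}) · k. Moreover, equality 2^{s−1} · A(s,k) = (2^s − 1) · k holds if and only if k is divisible by 2^{s−1}. -/

import Mathlib

/-- An `s × m` matrix `G` over `F_2` has property `A_k` if for every `i` there exist
`k` pairwise disjoint subsets of the columns of `G` such that the columns in each
subset sum to the standard basis vector `e_i`. -/
def hasPropertyA (s m k : ℕ) (G : Matrix (Fin s) (Fin m) (ZMod 2)) : Prop :=
  ∀ i : Fin s, ∃ R : Fin k → Finset (Fin m),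
    (∀ j j' : Fin k, j ≠ j' → Disjoint (R j) (R j')) ∧
    ∀ j : Fin k, ∀ r : Fin s, (∑ c ∈ R j, G r c) = if r = i then 1 else 0

/-- `PIRlen s k` = `A(s,k)`: the smallest `m` such that an `s × m` matrix over `F_2`
with property `A_k` exists. -/
noncomputable def PIRlen (s k : ℕ) : ℕ :=
  sInf {m : ℕ | ∃ G : Matrix (Fin s) (Fin m) (ZMod 2), hasPropertyA s m k G}

open Finset

section Aux

lemma exists_one_of_sum_one {α : Type*} (t : Finset α) (f : α → ZMod 2)
    (h : ∑ c ∈ t, f c = 1) : ∃ c ∈ t, f c = 1 := by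
  by_contra hc
  push_neg at hc
  have : ∑ c ∈ t, f c = 0 := by
    apply Finset.sum_eq_zero
    intro c hct
    rcases (by decide : ∀ a : ZMod 2, a = 0 ∨ a = 1) (f c) with h0 | h1
    · exact h0
    · exact absurd h1 (hc c hct)
  rw [this] at h
  exact absurd h (by decide)

lemma row_count {s m k : ℕ} {G : Matrix (Fin s) (Fin m) (ZMod 2)}
    (hG : hasPropertyA s m k G) (v : Fin s → ZMod 2) (i : Fin s) (hvi : v i = 1) :
    k ≤ (univ.filter (fun c => ∑ r, v r * G r c = 1)).card := by
  obtain ⟨R, hdisj, hsum⟩ := hG i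
  have key : ∀ j : Fin k, ∃ c ∈ R j, ∑ r, v r * G r c = 1 := by
    intro j
    apply exists_one_of_sum_one
    rw [Finset.sum_comm]
    have : ∀ r : Fin s, ∑ c ∈ R j, v r * G r c = v r * (if r = i then 1 else 0) := by
      intro r
      rw [← Finset.mul_sum, hsum j r]
    simp_rw [this]
    simp [hvi]
  choose f hfmem hf1 using key
  have hinj : Set.InjOn f (univ : Finset (Fin k)) := by
    intro j _ j' _ hjj'
    by_contra hne
    exact (Finset.disjoint_left.mp (hdisj j j' hne)) (hfmem j) (hjj' ▸ hfmem j')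
  have h : (univ : Finset (Fin k)).card ≤ (univ.filter (fun c => ∑ r, v r * G r c = 1)).card :=
    Finset.card_le_card_of_injOn f (fun j _ =>
      Finset.mem_filter.mpr ⟨Finset.mem_univ _, by simpa using hf1 j⟩) hinj
  have h2 : (univ : Finset (Fin k)).card = k := by simp
  omega

lemma col_count {s : ℕ} (hs : 0 < s) (w : Fin s → ZMod 2) :
    (univ.filter (fun v : Fin s → ZMod 2 => ∑ r, v r * w r = 1)).card ≤ 2 ^ (s - 1) := by
  by_cases hw : w = 0
  · subst hw
    simp
  · obtain ⟨i, hi⟩ : ∃ i, w i ≠ 0 := Function.ne_iff.mp hw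
    have hwi : w i = 1 := by
      rcases (by decide : ∀ a : ZMod 2, a = 0 ∨ a = 1) (w i) with h | h
      · exact absurd h hi
      · exact h
    set δ : Fin s → ZMod 2 := fun r => if r = i then 1 else 0 with hδ
    set A := univ.filter (fun v : Fin s → ZMod 2 => ∑ r, v r * w r = 1) with hA
    set B := univ.filter (fun v : Fin s → ZMod 2 => ¬ (∑ r, v r * w r = 1)) with hB
    have hdot : ∀ v : Fin s → ZMod 2, ∑ r, (v r + δ r) * w r = (∑ r, v r * w r) + 1 := by
      intro v
      have : ∀ r, (v r + δ r) * w r = v r * w r + δ r * w r := fun r => by ring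
      simp_rw [this, Finset.sum_add_distrib]
      congr 1
      have : ∀ r : Fin s, δ r * w r = if r = i then w r else 0 := by
        intro r; rw [hδ]; by_cases h : r = i <;> simp [h]
      simp_rw [this, Finset.sum_ite_eq' univ i w]
      simp [hwi]
    have hcard : A.card ≤ B.card := by
      apply Finset.card_le_card_of_injOn (fun v => v + δ)
      · intro v hv
        rw [hA, Finset.mem_coe, Finset.mem_filter] at hv
        rw [hB, Finset.mem_coe, Finset.mem_filter]
        refine ⟨Finset.mem_univ _, ?_⟩
        have : ∑ r, (v r + δ r) * w r = 0 := by rw [hdot, hv.2]; decide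
        intro hcon
        have hc2 : ∑ r, (fun r => v r + δ r) r * w r = 1 := hcon
        rw [this] at hc2
        exact absurd hc2 (by decide)
      · intro v _ v' _ h
        have := congrArg (fun u => u - δ) h
        simpa using this
    have hsplit : A.card + B.card = 2 ^ s := by
      rw [hA, hB]
      rw [Finset.card_filter_add_card_filter_not]
      simp [Finset.card_univ]
    have h2s : 2 ^ s = 2 * 2 ^ (s - 1) := by
      conv_lhs => rw [show s = (s - 1) + 1 by omega]
      ring
    omega

lemma lower_bound {s m k : ℕ} (hs : 0 < s) {G : Matrix (Fin s) (Fin m) (ZMod 2)}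
    (hG : hasPropertyA s m k G) : (2 ^ s - 1) * k ≤ 2 ^ (s - 1) * m := by
  classical
  set V := (univ : Finset (Fin s → ZMod 2)).filter (fun v => v ≠ 0) with hV
  have hVcard : V.card = 2 ^ s - 1 := by
    rw [hV, Finset.filter_ne' univ (0 : Fin s → ZMod 2),
      Finset.card_erase_of_mem (Finset.mem_univ _)]
    simp [Finset.card_univ]
  have step1 : (2 ^ s - 1) * k ≤ ∑ v ∈ V, (univ.filter (fun c => ∑ r, v r * G r c = 1)).card := by
    rw [← hVcard]
    have := Finset.card_nsmul_le_sum V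
      (fun v => (univ.filter (fun c => ∑ r, v r * G r c = 1)).card) k ?_
    · simpa using this
    · intro v hv
      rw [hV, Finset.mem_filter] at hv
      obtain ⟨i, hi⟩ : ∃ i, v i ≠ 0 := Function.ne_iff.mp hv.2
      have hvi : v i = 1 := by
        rcases (by decide : ∀ a : ZMod 2, a = 0 ∨ a = 1) (v i) with h | h
        · exact absurd h hi
        · exact h
      exact row_count hG v i hvi
  have step2 : ∑ v ∈ V, (univ.filter (fun c => ∑ r, v r * G r c = 1)).card
      ≤ ∑ v : Fin s → ZMod 2, (univ.filter (fun c => ∑ r, v r * G r c = 1)).card :=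
    Finset.sum_le_sum_of_subset (Finset.filter_subset _ _)
  have step3 : ∑ v : Fin s → ZMod 2, (univ.filter (fun c => ∑ r, v r * G r c = 1)).card
      = ∑ c : Fin m, (univ.filter (fun v : Fin s → ZMod 2 => ∑ r, v r * G r c = 1)).card := by
    simp_rw [Finset.card_filter]
    exact Finset.sum_comm
  have step4 : ∑ c : Fin m, (univ.filter (fun v : Fin s → ZMod 2 => ∑ r, v r * G r c = 1)).card
      ≤ m * 2 ^ (s - 1) := by
    calc ∑ c : Fin m, (univ.filter (fun v : Fin s → ZMod 2 => ∑ r, v r * G r c = 1)).card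
        ≤ ∑ _c : Fin m, 2 ^ (s - 1) := Finset.sum_le_sum (fun c _ => col_count hs (fun r => G r c))
      _ = m * 2 ^ (s - 1) := by simp [Finset.card_univ, mul_comm]
  calc (2 ^ s - 1) * k ≤ _ := step1
    _ ≤ _ := step2
    _ = _ := step3
    _ ≤ m * 2 ^ (s - 1) := step4
    _ = 2 ^ (s - 1) * m := mul_comm _ _

lemma propA_of_equiv {s m k : ℕ} {α : Type} [DecidableEq α] (e : α ≃ Fin m)
    (G : Fin s → α → ZMod 2)
    (h : ∀ i : Fin s, ∃ R : Fin k → Finset α,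
      (∀ j j' : Fin k, j ≠ j' → Disjoint (R j) (R j')) ∧
      ∀ j : Fin k, ∀ r : Fin s, (∑ c ∈ R j, G r c) = if r = i then 1 else 0) :
    hasPropertyA s m k (Matrix.of fun r c => G r (e.symm c)) := by
  intro i
  obtain ⟨R, hdisj, hsum⟩ := h i
  refine ⟨fun j => (R j).map e.toEmbedding, ?_, ?_⟩
  · intro j j' hne
    exact Finset.disjoint_map e.toEmbedding |>.mpr (hdisj j j' hne)
  · intro j r
    rw [Finset.sum_map]
    simp only [Equiv.coe_toEmbedding, Matrix.of_apply, Equiv.symm_apply_apply]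
    exact hsum j r

lemma exists_simple (s k : ℕ) :
    ∃ G : Matrix (Fin s) (Fin (s * k)) (ZMod 2), hasPropertyA s (s * k) k G := by
  classical
  refine ⟨_, propA_of_equiv (finProdFinEquiv : Fin s × Fin k ≃ Fin (s * k))
    (fun r p => if r = p.1 then (1 : ZMod 2) else 0) ?_⟩
  intro i
  refine ⟨fun j => {(i, j)}, ?_, ?_⟩
  · intro j j' hne
    simp only [Finset.disjoint_singleton]
    exact fun h => hne (Prod.ext_iff.mp h).2
  · intro j r
    rw [Finset.sum_singleton]

lemma card_nonzero (s : ℕ) :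
    Fintype.card {v : Fin s → ZMod 2 // v ≠ 0} = 2 ^ s - 1 := by
  have h1 : Fintype.card {v : Fin s → ZMod 2 // v = 0} = 1 := Fintype.card_subtype_eq 0
  have h2 := Fintype.card_subtype_compl (fun v : Fin s → ZMod 2 => v = 0)
  rw [h1] at h2
  have h3 : Fintype.card (Fin s → ZMod 2) = 2 ^ s := by simp
  rw [h3] at h2
  exact h2

lemma card_vanish {s : ℕ} (i : Fin s) :
    Fintype.card {w : Fin s → ZMod 2 // w i = 0} = 2 ^ (s - 1) := by
  classical
  have e : {w : Fin s → ZMod 2 // w i = 0} ≃ ({j : Fin s // j ≠ i} → ZMod 2) :=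
  { toFun := fun w j => w.1 j.1
    invFun := fun f => ⟨fun r => if h : r = i then 0 else f ⟨r, h⟩, by simp⟩
    left_inv := by
      intro w
      apply Subtype.ext
      funext r
      by_cases h : r = i
      · subst h
        simp [w.2]
      · simp [h]
    right_inv := by
      intro f
      funext j
      simp [j.2] }
  have hji : Fintype.card {j : Fin s // j ≠ i} = s - 1 := by
    have h1 : Fintype.card {j : Fin s // j = i} = 1 := Fintype.card_subtype_eq i
    have h2 := Fintype.card_subtype_compl (fun j : Fin s => j = i)
    rw [h1, Fintype.card_fin] at h2
    exact h2
  rw [Fintype.card_congr e, Fintype.card_fun, hji, ZMod.card]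

lemma exists_opt (s t : ℕ) (hs : 0 < s) :
    ∃ G : Matrix (Fin s) (Fin ((2 ^ s - 1) * t)) (ZMod 2),
      hasPropertyA s ((2 ^ s - 1) * t) (2 ^ (s - 1) * t) G := by
  classical
  have hcard : Fintype.card ({v : Fin s → ZMod 2 // v ≠ 0} × Fin t) = (2 ^ s - 1) * t := by
    simp [card_nonzero]
  let e : {v : Fin s → ZMod 2 // v ≠ 0} × Fin t ≃ Fin ((2 ^ s - 1) * t) :=
    Fintype.equivFinOfCardEq hcard
  refine ⟨_, propA_of_equiv e (fun r c => c.1.1 r) ?_⟩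
  intro i
  set δ : Fin s → ZMod 2 := fun r => if r = i then 1 else 0 with hδ
  have hδi : δ i = 1 := by simp [hδ]
  have hδne : δ ≠ 0 := by
    intro h
    have h2 := congrFun h i
    rw [hδi, Pi.zero_apply] at h2
    exact one_ne_zero h2
  have hq : Fintype.card ({w : Fin s → ZMod 2 // w i = 0} × Fin t) = 2 ^ (s - 1) * t := by
    simp [card_vanish i]
  let q : Fin (2 ^ (s - 1) * t) ≃ {w : Fin s → ZMod 2 // w i = 0} × Fin t :=
    (Fintype.equivFinOfCardEq hq).symm
  have hplus : ∀ w : {w : Fin s → ZMod 2 // w i = 0}, w.1 ≠ 0 → w.1 + δ ≠ 0 := by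
    intro w hw h
    have h2 := congrFun h i
    simp [w.2, hδi] at h2
  set S : {w : Fin s → ZMod 2 // w i = 0} → Fin t → Finset ({v : Fin s → ZMod 2 // v ≠ 0} × Fin t) :=
    fun w a => if h : w.1 = 0 then {(⟨δ, hδne⟩, a)}
      else {(⟨w.1, h⟩, a), (⟨w.1 + δ, hplus w h⟩, a)} with hS
  set π : (Fin s → ZMod 2) → (Fin s → ZMod 2) := fun v r => if r = i then 0 else v r with hπ
  have hmem : ∀ w a x, x ∈ S w a → x.2 = a ∧ π x.1.1 = w.1 := by
    intro w a x hx
    rw [hS] at hx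
    by_cases h : w.1 = 0
    · simp only [dif_pos h, Finset.mem_singleton] at hx
      subst hx
      refine ⟨rfl, ?_⟩
      funext r
      rw [h]
      by_cases hr : r = i <;> simp [hπ, hδ, hr]
    · simp only [dif_neg h, Finset.mem_insert, Finset.mem_singleton] at hx
      have hw1 : π w.1 = w.1 := by
        funext r
        by_cases hr : r = i
        · subst hr; simp [hπ, w.2]
        · simp [hπ, hr]
      have hw2 : π (w.1 + δ) = w.1 := by
        funext r
        by_cases hr : r = i
        · subst hr; simp [hπ, w.2]
        · simp [hπ, hδ, hr]
      rcases hx with hx | hx <;> subst hx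
      · exact ⟨rfl, hw1⟩
      · exact ⟨rfl, hw2⟩
  refine ⟨fun j => S (q j).1 (q j).2, ?_, ?_⟩
  · intro j j' hne
    rw [Finset.disjoint_left]
    intro x hx hx'
    obtain ⟨h1, h2⟩ := hmem _ _ x hx
    obtain ⟨h1', h2'⟩ := hmem _ _ x hx'
    apply hne
    apply q.injective
    have : (q j).1 = (q j').1 := Subtype.ext (h2.symm.trans h2')
    exact Prod.ext this (h1.symm.trans h1')
  · intro j r
    have key : ∀ w a, (∑ c ∈ S w a, c.1.1 r) = δ r := by
      intro w a
      rw [hS]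
      by_cases h : w.1 = 0
      · simp only [dif_pos h, Finset.sum_singleton]
      · simp only [dif_neg h]
        have hne2 : (⟨⟨w.1, h⟩, a⟩ : {v : Fin s → ZMod 2 // v ≠ 0} × Fin t)
            ≠ ⟨⟨w.1 + δ, hplus w h⟩, a⟩ := by
          intro hcon
          have := congrArg (fun p => p.1.1) hcon
          simp only at this
          have h3 := congrFun this i
          simp only [Pi.add_apply, w.2, hδi, zero_add] at h3
          exact absurd h3.symm (by decide)
        rw [Finset.sum_pair hne2]
        show w.1 r + (w.1 + δ) r = δ r
        have haa : ∀ a : ZMod 2, a + a = 0 := by decide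
        calc w.1 r + (w.1 + δ) r = (w.1 r + w.1 r) + δ r := by rw [Pi.add_apply]; ring
          _ = δ r := by rw [haa, zero_add]
    rw [key]

end Aux

/-- Lower bound for fixed `s`: `A(s,k) ≥ ((2^s − 1)/2^{s−1})·k`, with equality
iff `2^{s−1}` divides `k`. -/
theorem pir_lower_bound_fixed_s (s k : ℕ) (hs : 0 < s) (hk : 0 < k) :
    (2 ^ s - 1) * k ≤ 2 ^ (s - 1) * PIRlen s k ∧
    (2 ^ (s - 1) * PIRlen s k = (2 ^ s - 1) * k ↔ 2 ^ (s - 1) ∣ k) := by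
  classical
  have hne : {m : ℕ | ∃ G : Matrix (Fin s) (Fin m) (ZMod 2), hasPropertyA s m k G}.Nonempty :=
    ⟨s * k, exists_simple s k⟩
  obtain ⟨G, hG⟩ := Nat.sInf_mem hne
  have LB : (2 ^ s - 1) * k ≤ 2 ^ (s - 1) * PIRlen s k := lower_bound hs hG
  refine ⟨LB, ?_, ?_⟩
  · intro heq
    have hdvd : 2 ^ (s - 1) ∣ (2 ^ s - 1) * k := ⟨PIRlen s k, heq.symm⟩
    have h1 : 2 ^ s = 2 * 2 ^ (s - 1) := by
      conv_lhs => rw [show s = (s - 1) + 1 by omega]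
      ring
    have h2 : 1 ≤ 2 ^ (s - 1) := Nat.one_le_two_pow
    have hodd : ¬ (2 ∣ 2 ^ s - 1) := by omega
    have hcop : Nat.Coprime (2 ^ (s - 1)) (2 ^ s - 1) :=
      Nat.Coprime.pow_left _ ((Nat.Prime.coprime_iff_not_dvd Nat.prime_two).mpr hodd)
    exact hcop.dvd_of_dvd_mul_right (mul_comm (2 ^ s - 1) k ▸ hdvd)
  · rintro ⟨u, rfl⟩
    have hle : PIRlen s (2 ^ (s - 1) * u) ≤ (2 ^ s - 1) * u := by
      apply Nat.sInf_le
      exact exists_opt s u hs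
    have hub : 2 ^ (s - 1) * PIRlen s (2 ^ (s - 1) * u) ≤ (2 ^ s - 1) * (2 ^ (s - 1) * u) := by
      calc 2 ^ (s - 1) * PIRlen s (2 ^ (s - 1) * u)
          ≤ 2 ^ (s - 1) * ((2 ^ s - 1) * u) := Nat.mul_le_mul_left _ hle
        _ = (2 ^ s - 1) * (2 ^ (s - 1) * u) := by ring
    omega
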